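/- Let A be an associative unital ℂ-algebra with the elements and relations described. Then for all s, t, c ∈ ℕ one has [X⁺_t, X_s^{−(c)}] = X_s^{−(c−1)}·J_{s+t}^⟨1⟩ − X_s^{−(c−2)}·X_s^{−((1);s+t)}, where J_m^⟨1⟩ := J_m − Q·J_{m+1} and X_s^{−(b)} := 0 for integers b < 0. -/
import Mathlib


open Finset

/-- `X_t^{±((p);h)}`: for `p > 0`, `Σ_{w=0}^{p} C(p,w)·(−Q)^w·X_{t+p·h+w}`; for `p = 0`, `1`. -/
noncomputable def Xbr {A : Type*} [Ring A] [Algebra ℂ A] (Q : ℂ) (X : ℕ → A) (t p h : ℕ) : A :=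
  if p = 0 then 1
  else ∑ w ∈ Finset.range (p + 1), ((p.choose w : ℂ) * (-Q) ^ w) • X (t + p * h + w)

/-- Divided power `X_t^{(b)} = (X_t)^b / b!` for `b ≥ 0`, and `0` for `b < 0`. -/
noncomputable def Xdiv {A : Type*} [Ring A] [Algebra ℂ A] (X : ℕ → A) (t : ℕ) (b : ℤ) : A :=
  if b < 0 then 0 else ((b.toNat.factorial : ℂ))⁻¹ • X t ^ b.toNat

theorem stmt3 {A : Type*} [Ring A] [Algebra ℂ A] (Q : ℂ) (Xp Xm J : ℕ → A)
    (hL1 : ∀ s t, J s * J t = J t * J s)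
    (hL2p : ∀ s t, J s * Xp t - Xp t * J s = (2 : ℂ) • Xp (s + t))
    (hL2m : ∀ s t, J s * Xm t - Xm t * J s = -((2 : ℂ) • Xm (s + t)))
    (hL3 : ∀ s t, Xp t * Xm s - Xm s * Xp t = J (s + t) - Q • J (s + t + 1))
    (hL4p : ∀ s t, Xp t * Xp s = Xp s * Xp t)
    (hL4m : ∀ s t, Xm t * Xm s = Xm s * Xm t)
    (s t c : ℕ) :
    Xp t * Xdiv Xm s (c : ℤ) - Xdiv Xm s (c : ℤ) * Xp t =
      Xdiv Xm s ((c : ℤ) - 1) * (J (s + t) - Q • J (s + t + 1)) -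
        Xdiv Xm s ((c : ℤ) - 2) * Xbr Q Xm s 1 (s + t) := by
  set Y := Xm s with hY
  set H := J (s + t) - Q • J (s + t + 1) with hH
  set B := Xm (s + t + s) - Q • Xm (s + t + s + 1) with hBdef
  have hB : Xbr Q Xm s 1 (s + t) = B := by
    simp [Xbr, Finset.sum_range_succ, hBdef]
    rw [show s + (s + t) = s + t + s by ring]
    simp [sub_eq_add_neg]
  have h1 : Xp t * Y - Y * Xp t = H := hL3 s t
  have hHY : H * Y = Y * H - (2 : ℂ) • B := by
    have e1 := eq_add_of_sub_eq (hL2m (s + t) s)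
    have e2 := eq_add_of_sub_eq (hL2m (s + t + 1) s)
    rw [show s + t + 1 + s = s + t + s + 1 by ring] at e2
    rw [hH, hBdef, sub_mul, mul_sub, smul_mul_assoc, mul_smul_comm, hY, e1, e2]
    module
  have hBY : B * Y = Y * B := by
    rw [hBdef, sub_mul, mul_sub, smul_mul_assoc, mul_smul_comm, hY,
      hL4m s (s+t+s), hL4m s (s+t+s+1)]
  have key : ∀ n : ℕ, Xp t * Y ^ n - Y ^ n * Xp t =
      (n : ℂ) • (Y ^ (n - 1) * H) - ((n : ℂ) * ((n : ℂ) - 1)) • (Y ^ (n - 2) * B) := by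
    intro n
    induction n with
    | zero => simp
    | succ n ih =>
      have expand : Xp t * Y ^ (n + 1) - Y ^ (n + 1) * Xp t =
          (Xp t * Y ^ n - Y ^ n * Xp t) * Y + Y ^ n * (Xp t * Y - Y * Xp t) := by
        rw [pow_succ]; noncomm_ring
      rw [expand, ih, h1]
      rcases n with _ | n
      · simp
      rcases n with _ | n
      · norm_num
        rw [hHY]
        module
      · -- n+2 case, proving for n+3
        have e1 : Y ^ (n + 1) * H * Y = Y ^ (n + 2) * H - (2 : ℂ) • (Y ^ (n + 1) * B) := by
          rw [mul_assoc, hHY, mul_sub, mul_smul_comm, ← mul_assoc, ← pow_succ]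
        have e2 : Y ^ n * B * Y = Y ^ (n + 1) * B := by
          rw [mul_assoc, hBY, ← mul_assoc, ← pow_succ]
        simp only [Nat.add_sub_cancel, show n + 3 - 1 = n + 2 from rfl,
          show n + 3 - 2 = n + 1 from rfl, show n + 2 - 1 = n + 1 from rfl,
          show n + 2 - 2 = n from rfl, show n + 1 - 1 = n from rfl]
        rw [sub_mul, smul_mul_assoc, smul_mul_assoc, e1, e2,
          show n + 1 + 1 = n + 2 from rfl, show n + 1 + 1 + 1 = n + 3 from rfl]
        push_cast
        match_scalars <;> ring
  -- now final assembly
  rcases c with _ | c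
  · simp [Xdiv]
  rcases c with _ | c
  · simpa [Xdiv] using h1
  · have hc := key (c + 2)
    have f0 : (((c:ℤ) + 2 : ℤ)) = ((c + 2 : ℕ) : ℤ) := by push_cast; ring
    have hfac : ((c + 2).factorial : ℂ) = (c + 2 : ℂ) * ((c + 1).factorial : ℂ) := by
      rw [Nat.factorial_succ]; push_cast; ring
    have hfac1 : ((c + 1).factorial : ℂ) = (c + 1 : ℂ) * (c.factorial : ℂ) := by
      rw [Nat.factorial_succ]; push_cast; ring
    have hne2 : ((c + 2 : ℕ).factorial : ℂ) ≠ 0 := by exact_mod_cast Nat.factorial_ne_zero _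
    have hne1 : ((c + 1 : ℕ).factorial : ℂ) ≠ 0 := by exact_mod_cast Nat.factorial_ne_zero _
    have hne0 : ((c : ℕ).factorial : ℂ) ≠ 0 := by exact_mod_cast Nat.factorial_ne_zero _
    have hXd : Xdiv Xm s ((c + 2 : ℕ) : ℤ) = (((c+2).factorial : ℂ))⁻¹ • Y ^ (c + 2) := by
      simp only [Xdiv]
      rw [if_neg (by omega), show (((c + 2 : ℕ) : ℤ)).toNat = c + 2 by omega]
    have hXd1 : Xdiv Xm s (((c + 2 : ℕ) : ℤ) - 1) = (((c+1).factorial : ℂ))⁻¹ • Y ^ (c + 1) := by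
      have : (((c + 2 : ℕ) : ℤ) - 1) = ((c + 1 : ℕ) : ℤ) := by push_cast; ring
      rw [this]; simp only [Xdiv]
      rw [if_neg (by omega), show (((c + 1 : ℕ) : ℤ)).toNat = c + 1 by omega]
    have hXd2 : Xdiv Xm s (((c + 2 : ℕ) : ℤ) - 2) = ((c.factorial : ℂ))⁻¹ • Y ^ c := by
      have : (((c + 2 : ℕ) : ℤ) - 2) = ((c : ℕ) : ℤ) := by push_cast; ring
      rw [this]; simp only [Xdiv]
      rw [if_neg (by omega), show (((c : ℕ) : ℤ)).toNat = c by omega]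
    rw [hXd, hXd1, hXd2, hB, mul_smul_comm, smul_mul_assoc, ← smul_sub,
      smul_mul_assoc, smul_mul_assoc]
    simp only [Nat.add_sub_cancel, show c + 2 - 2 = c from rfl,
      show c + 2 - 1 = c + 1 from rfl] at hc
    rw [hc]
    rw [smul_sub, smul_smul, smul_smul]
    have hch2 : ((c:ℂ) + 2) ≠ 0 := by exact_mod_cast Nat.succ_ne_zero (c+1)
    have hch1 : ((c:ℂ) + 1) ≠ 0 := by exact_mod_cast Nat.succ_ne_zero c
    have k1 : (((c+2).factorial : ℂ))⁻¹ * ((c + 2 : ℕ) : ℂ) = (((c+1).factorial : ℂ))⁻¹ := by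
      rw [hfac]; push_cast; field_simp
    have k2 : (((c+2).factorial : ℂ))⁻¹ * (((c + 2 : ℕ) : ℂ) * (((c + 2 : ℕ) : ℂ) - 1)) =
        ((c.factorial : ℂ))⁻¹ := by
      rw [hfac, hfac1]; push_cast
      field_simp
      ring
    rw [k1, k2]
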